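/- Let n = 2, let L_1 be a nonzero real number and set L_2 = 2L_1. With the anisotropic Heisenberg vector fields X_1, X_2, X_3, X_4 on ℝ^5, define B = |L_1|((1/2)x_1² + x_2² + (1/2)x_3² + x_4²), A = |L_1|(x_1² + x_2² + x_3² + x_4²), and N = (B² + t²)^{1/8} (A − B + √(B² + t²))^{3/8} / (B + √(B² + t²))^{1/8}. Then N is NOT infinite-harmonic on ℝ^5 \ {0}: there exists a point p ∈ ℝ^5 \ {0} at which Δ_∞ N(p) = Σ_{i,j=1}^{4} X_i(X_j N)(p) · X_i N(p) · X_j N(p) ≠ 0. -/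

import Mathlib

/-- Partial derivative of `f : ℝ^m → ℝ` in the `i`-th coordinate direction. -/
noncomputable def pderiv' {m : ℕ} (i : Fin m) (f : (Fin m → ℝ) → ℝ) (q : Fin m → ℝ) : ℝ :=
  fderiv ℝ f q (Pi.single i 1)

/-- The anisotropic Heisenberg vector fields on ℝ^{2n+1}. -/
noncomputable def X (n : ℕ) (L : Fin n → ℝ) (j : Fin (2*n))
    (f : (Fin (2*n+1) → ℝ) → ℝ) (q : Fin (2*n+1) → ℝ) : ℝ :=
  pderiv' ⟨(j : ℕ), by have := j.isLt; omega⟩ f q +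
    (if h : (j : ℕ) < n then
        -(L ⟨(j : ℕ), h⟩) * q ⟨(j : ℕ) + n, by have := j.isLt; omega⟩
      else
        (L ⟨(j : ℕ) - n, by have := j.isLt; omega⟩) * q ⟨(j : ℕ) - n, by have := j.isLt; omega⟩) *
      pderiv' ⟨2*n, by omega⟩ f q

/-- `B = |L₁| ((1/2)x₁² + x₂² + (1/2)x₃² + x₄²)`. -/
noncomputable def Bfun (L₁ : ℝ) (q : Fin (2*2+1) → ℝ) : ℝ :=
  |L₁| * ((1/2) * (q 0)^2 + (q 1)^2 + (1/2) * (q 2)^2 + (q 3)^2)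

/-- `A = |L₁| (x₁² + x₂² + x₃² + x₄²)`. -/
noncomputable def Afun (L₁ : ℝ) (q : Fin (2*2+1) → ℝ) : ℝ :=
  |L₁| * ((q 0)^2 + (q 1)^2 + (q 2)^2 + (q 3)^2)

/-- `N = (B² + t²)^{1/8} (A − B + √(B² + t²))^{3/8} / (B + √(B² + t²))^{1/8}`. -/
noncomputable def Nfun (L₁ : ℝ) (q : Fin (2*2+1) → ℝ) : ℝ :=
  ((Bfun L₁ q)^2 + (q 4)^2) ^ ((1:ℝ)/8) *
    (Afun L₁ q - Bfun L₁ q + Real.sqrt ((Bfun L₁ q)^2 + (q 4)^2)) ^ ((3:ℝ)/8) /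
      (Bfun L₁ q + Real.sqrt ((Bfun L₁ q)^2 + (q 4)^2)) ^ ((1:ℝ)/8)

noncomputable section AHAux
open Real
set_option maxHeartbeats 1000000

abbrev VV := Fin (2*2+1) → ℝ

noncomputable def pr (i : Fin (2*2+1)) : VV →L[ℝ] ℝ := ContinuousLinearMap.proj i

noncomputable def Lam (a0 a1 a2 a3 a4 : ℝ) : VV →L[ℝ] ℝ :=
  a0 • pr 0 + a1 • pr 1 + a2 • pr 2 + a3 • pr 3 + a4 • pr 4

@[simp] lemma Lam_apply (a0 a1 a2 a3 a4 : ℝ) (v : VV) :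
    Lam a0 a1 a2 a3 a4 v = a0 * v 0 + a1 * v 1 + a2 * v 2 + a3 * v 3 + a4 * v 4 := by
  simp [Lam, pr]

lemma hasCoord (i : Fin (2*2+1)) (q : VV) : HasFDerivAt (fun q : VV => q i) (pr i) q :=
  hasFDerivAt_apply i q

lemma hasSq (i : Fin (2*2+1)) (q : VV) :
    HasFDerivAt (fun q : VV => (q i)^2) ((2 * q i) • pr i) q := by
  simpa [Function.comp_def] using (hasDerivAt_pow 2 (q i)).comp_hasFDerivAt q (hasCoord i q)

noncomputable def Sfn (L₁ : ℝ) (q : VV) : ℝ := Real.sqrt ((Bfun L₁ q)^2 + (q 4)^2)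
noncomputable def Rfn (L₁ : ℝ) (q : VV) : ℝ := Afun L₁ q - Bfun L₁ q + Sfn L₁ q
noncomputable def Tfn (L₁ : ℝ) (q : VV) : ℝ := Bfun L₁ q + Sfn L₁ q
noncomputable def wfn (L₁ : ℝ) (q : VV) : ℝ :=
  (1/4) * Real.log (Sfn L₁ q) + (3/8) * Real.log (Rfn L₁ q) - (1/8) * Real.log (Tfn L₁ q)
noncomputable def Efn (L₁ : ℝ) (q : VV) : ℝ := Real.exp (wfn L₁ q)

noncomputable def KS (L₁ : ℝ) (q : VV) : ℝ :=
  (4 * Sfn L₁ q)⁻¹ + 3 * (8 * Rfn L₁ q)⁻¹ - (8 * Tfn L₁ q)⁻¹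
noncomputable def CB (L₁ : ℝ) (q : VV) : ℝ :=
  Bfun L₁ q * (Sfn L₁ q)⁻¹ * KS L₁ q - 3 * (8 * Rfn L₁ q)⁻¹ - (8 * Tfn L₁ q)⁻¹
noncomputable def CA (L₁ : ℝ) (q : VV) : ℝ := 3 * (8 * Rfn L₁ q)⁻¹
noncomputable def Ct (L₁ : ℝ) (q : VV) : ℝ := q 4 * (Sfn L₁ q)⁻¹ * KS L₁ q

noncomputable def w0 (L₁ : ℝ) (q : VV) : ℝ := CB L₁ q * (|L₁| * q 0) + CA L₁ q * (2*|L₁| * q 0)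
noncomputable def w1 (L₁ : ℝ) (q : VV) : ℝ := CB L₁ q * (2*|L₁| * q 1) + CA L₁ q * (2*|L₁| * q 1)
noncomputable def w2 (L₁ : ℝ) (q : VV) : ℝ := CB L₁ q * (|L₁| * q 2) + CA L₁ q * (2*|L₁| * q 2)
noncomputable def w3 (L₁ : ℝ) (q : VV) : ℝ := CB L₁ q * (2*|L₁| * q 3) + CA L₁ q * (2*|L₁| * q 3)

noncomputable def g0 (L₁ : ℝ) (q : VV) : ℝ :=
  Efn L₁ q * w0 L₁ q + (-L₁ * q 2) * (Efn L₁ q * Ct L₁ q)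
noncomputable def g1 (L₁ : ℝ) (q : VV) : ℝ :=
  Efn L₁ q * w1 L₁ q + (-(2*L₁) * q 3) * (Efn L₁ q * Ct L₁ q)
noncomputable def g2 (L₁ : ℝ) (q : VV) : ℝ :=
  Efn L₁ q * w2 L₁ q + (L₁ * q 0) * (Efn L₁ q * Ct L₁ q)
noncomputable def g3 (L₁ : ℝ) (q : VV) : ℝ :=
  Efn L₁ q * w3 L₁ q + (2*L₁ * q 1) * (Efn L₁ q * Ct L₁ q)

def UU (L₁ : ℝ) : Set VV := {q | 0 < Bfun L₁ q ∧ Bfun L₁ q < Afun L₁ q}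

noncomputable def pt : VV := fun i => if i.1 = 0 ∨ i.1 = 1 then 1 else 0

@[simp] lemma pt0 : pt 0 = 1 := rfl
@[simp] lemma pt1 : pt 1 = 1 := rfl
@[simp] lemma pt2 : pt 2 = 0 := rfl
@[simp] lemma pt3 : pt 3 = 0 := rfl
@[simp] lemma pt4 : pt 4 = 0 := rfl

variable {L₁ : ℝ} {q : VV}

lemma S_pos (hq : q ∈ UU L₁) : 0 < Sfn L₁ q := by
  have h := hq.1
  have h2 : (0:ℝ) < (Bfun L₁ q)^2 + (q 4)^2 := by positivity
  exact Real.sqrt_pos.2 h2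

lemma R_pos (hq : q ∈ UU L₁) : 0 < Rfn L₁ q := by
  have h1 := S_pos hq; have h2 := hq.2; unfold Rfn; linarith
lemma T_pos (hq : q ∈ UU L₁) : 0 < Tfn L₁ q := by
  have h1 := S_pos hq; have h2 := hq.1; unfold Tfn; linarith

lemma N_eq_E (hq : q ∈ UU L₁) : Nfun L₁ q = Efn L₁ q := by
  have hB := hq.1
  have hx : (0:ℝ) < (Bfun L₁ q)^2 + (q 4)^2 := by positivity
  have hR := R_pos hq
  have hT := T_pos hq
  have hlog : Real.log ((Bfun L₁ q)^2 + (q 4)^2) = 2 * Real.log (Sfn L₁ q) := by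
    unfold Sfn
    rw [Real.log_sqrt hx.le]; ring
  have hR' : (0:ℝ) < Afun L₁ q - Bfun L₁ q + Real.sqrt ((Bfun L₁ q)^2 + (q 4)^2) := hR
  have hT' : (0:ℝ) < Bfun L₁ q + Real.sqrt ((Bfun L₁ q)^2 + (q 4)^2) := hT
  rw [Nfun, Real.rpow_def_of_pos hx, Real.rpow_def_of_pos hR', Real.rpow_def_of_pos hT',
    ← Real.exp_add, ← Real.exp_sub, Efn, wfn]
  congr 1
  rw [hlog]
  unfold Rfn Tfn Sfn
  ring

lemma contB : Continuous (Bfun L₁) := by unfold Bfun; fun_prop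
lemma contA : Continuous (Afun L₁) := by unfold Afun; fun_prop

lemma isOpen_UU : IsOpen (UU L₁) :=
  (isOpen_lt continuous_const contB).inter (isOpen_lt contB contA)

lemma hasB (L₁ : ℝ) (q : VV) :
    HasFDerivAt (Bfun L₁)
      (Lam (|L₁| * q 0) (2*|L₁| * q 1) (|L₁| * q 2) (2*|L₁| * q 3) 0) q := by
  have h := (((((hasSq 0 q).const_mul (1/2:ℝ)).add (hasSq 1 q)).add
      ((hasSq 2 q).const_mul (1/2:ℝ))).add (hasSq 3 q)).const_mul |L₁|
  exact h.congr_fderiv (by ext v; simp [Lam, pr]; ring)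

lemma hasA (L₁ : ℝ) (q : VV) :
    HasFDerivAt (Afun L₁)
      (Lam (2*|L₁| * q 0) (2*|L₁| * q 1) (2*|L₁| * q 2) (2*|L₁| * q 3) 0) q := by
  have h := ((((hasSq 0 q).add (hasSq 1 q)).add (hasSq 2 q)).add (hasSq 3 q)).const_mul |L₁|
  exact h.congr_fderiv (by ext v; simp [Lam, pr]; ring)

lemma hasS (hq : q ∈ UU L₁) :
    HasFDerivAt (Sfn L₁)
      (Lam (Bfun L₁ q * (Sfn L₁ q)⁻¹ * (|L₁| * q 0))
           (Bfun L₁ q * (Sfn L₁ q)⁻¹ * (2*|L₁| * q 1))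
           (Bfun L₁ q * (Sfn L₁ q)⁻¹ * (|L₁| * q 2))
           (Bfun L₁ q * (Sfn L₁ q)⁻¹ * (2*|L₁| * q 3))
           (q 4 * (Sfn L₁ q)⁻¹)) q := by
  have hS := (S_pos hq).ne'
  have hx : ((Bfun L₁ q)^2 + (q 4)^2) ≠ 0 := by
    have := S_pos hq
    intro h0
    rw [Sfn, h0] at this; simp at this
  have hB2 : HasFDerivAt (fun q : VV => (Bfun L₁ q)^2)
      ((2 * Bfun L₁ q ^ 1) • (Lam (|L₁| * q 0) (2*|L₁| * q 1) (|L₁| * q 2) (2*|L₁| * q 3) 0)) q := by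
    simpa [Function.comp_def] using (hasDerivAt_pow 2 (Bfun L₁ q)).comp_hasFDerivAt q (hasB L₁ q)
  have hin := hB2.add (hasSq 4 q)
  have h := (Real.hasDerivAt_sqrt hx).comp_hasFDerivAt q hin
  refine h.congr_fderiv ?_
  ext v
  have hSS : Real.sqrt ((Bfun L₁ q)^2 + (q 4)^2) = Sfn L₁ q := rfl
  simp [Lam, pr, hSS]
  field_simp

lemma hasR (hq : q ∈ UU L₁) :
    HasFDerivAt (Rfn L₁)
      (Lam (2*|L₁| * q 0 - |L₁| * q 0 + Bfun L₁ q * (Sfn L₁ q)⁻¹ * (|L₁| * q 0))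
           (Bfun L₁ q * (Sfn L₁ q)⁻¹ * (2*|L₁| * q 1))
           (2*|L₁| * q 2 - |L₁| * q 2 + Bfun L₁ q * (Sfn L₁ q)⁻¹ * (|L₁| * q 2))
           (Bfun L₁ q * (Sfn L₁ q)⁻¹ * (2*|L₁| * q 3))
           (q 4 * (Sfn L₁ q)⁻¹)) q := by
  have h := ((hasA L₁ q).sub (hasB L₁ q)).add (hasS hq)
  exact h.congr_fderiv (by ext v; simp [Lam, pr]; ring)

lemma hasT (hq : q ∈ UU L₁) :
    HasFDerivAt (Tfn L₁)
      (Lam (|L₁| * q 0 + Bfun L₁ q * (Sfn L₁ q)⁻¹ * (|L₁| * q 0))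
           (2*|L₁| * q 1 + Bfun L₁ q * (Sfn L₁ q)⁻¹ * (2*|L₁| * q 1))
           (|L₁| * q 2 + Bfun L₁ q * (Sfn L₁ q)⁻¹ * (|L₁| * q 2))
           (2*|L₁| * q 3 + Bfun L₁ q * (Sfn L₁ q)⁻¹ * (2*|L₁| * q 3))
           (q 4 * (Sfn L₁ q)⁻¹)) q := by
  have h := (hasB L₁ q).add (hasS hq)
  exact h.congr_fderiv (by ext v; simp [Lam, pr]; ring)

lemma hasW (hq : q ∈ UU L₁) :
    HasFDerivAt (wfn L₁)
      (Lam (w0 L₁ q) (w1 L₁ q) (w2 L₁ q) (w3 L₁ q) (Ct L₁ q)) q := by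
  have hS := (S_pos hq).ne'
  have hR := (R_pos hq).ne'
  have hT := (T_pos hq).ne'
  have hlS := (Real.hasDerivAt_log hS).comp_hasFDerivAt q (hasS hq)
  have hlR := (Real.hasDerivAt_log hR).comp_hasFDerivAt q (hasR hq)
  have hlT := (Real.hasDerivAt_log hT).comp_hasFDerivAt q (hasT hq)
  have h := ((hlS.const_mul (1/4:ℝ)).add (hlR.const_mul (3/8:ℝ))).sub (hlT.const_mul (1/8:ℝ))
  refine h.congr_fderiv ?_
  ext v
  simp [Lam, pr, w0, w1, w2, w3, Ct, KS, CB, CA]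
  field_simp
  ring

lemma hasE (hq : q ∈ UU L₁) :
    HasFDerivAt (Efn L₁)
      (Lam (Efn L₁ q * w0 L₁ q) (Efn L₁ q * w1 L₁ q) (Efn L₁ q * w2 L₁ q)
        (Efn L₁ q * w3 L₁ q) (Efn L₁ q * Ct L₁ q)) q := by
  have h := (Real.hasDerivAt_exp (wfn L₁ q)).comp_hasFDerivAt q (hasW hq)
  refine h.congr_fderiv ?_
  ext v
  have : Real.exp (wfn L₁ q) = Efn L₁ q := rfl
  simp [Lam, pr, this]
  ring

lemma hasN (hq : q ∈ UU L₁) :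
    HasFDerivAt (Nfun L₁)
      (Lam (Efn L₁ q * w0 L₁ q) (Efn L₁ q * w1 L₁ q) (Efn L₁ q * w2 L₁ q)
        (Efn L₁ q * w3 L₁ q) (Efn L₁ q * Ct L₁ q)) q := by
  refine (hasE hq).congr_of_eventuallyEq ?_
  exact Filter.eventuallyEq_of_mem (isOpen_UU.mem_nhds hq) (fun x hx => N_eq_E hx)

@[simp] lemma single_eval (i k : Fin (2*2+1)) :
    (Pi.single i (1:ℝ) : VV) k = if k = i then 1 else 0 := by
  simp [Pi.single_apply]


section PT

lemma Bpt : Bfun L₁ pt = 3/2 * |L₁| := by simp [Bfun]; ring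
lemma Apt : Afun L₁ pt = 2 * |L₁| := by simp [Afun]; ring
lemma Spt : Sfn L₁ pt = 3/2 * |L₁| := by
  unfold Sfn
  rw [Bpt, pt4]
  rw [show (3/2 * |L₁|)^2 + (0:ℝ)^2 = (3/2*|L₁|)^2 by ring]
  exact Real.sqrt_sq (by positivity)
lemma Rpt : Rfn L₁ pt = 2 * |L₁| := by unfold Rfn; rw [Apt, Bpt, Spt]; ring
lemma Tpt : Tfn L₁ pt = 3 * |L₁| := by unfold Tfn; rw [Bpt, Spt]; ring

lemma abs_pos' (hL₁ : L₁ ≠ 0) : (0:ℝ) < |L₁| := abs_pos.2 hL₁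

lemma pt_mem (hL₁ : L₁ ≠ 0) : pt ∈ UU L₁ := by
  have hc := abs_pos' hL₁
  constructor
  · show 0 < Bfun L₁ pt
    rw [Bpt]; linarith
  · show Bfun L₁ pt < Afun L₁ pt
    rw [Bpt, Apt]; linarith

lemma KSpt (hL₁ : L₁ ≠ 0) : KS L₁ pt = 5 / (16 * |L₁|) := by
  have hc := abs_pos' hL₁
  unfold KS; rw [Spt, Rpt, Tpt]; field_simp; ring
lemma CBpt (hL₁ : L₁ ≠ 0) : CB L₁ pt = 1 / (12 * |L₁|) := by
  have hc := abs_pos' hL₁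
  unfold CB; rw [Bpt, Spt, Rpt, Tpt, KSpt hL₁]; field_simp; ring
lemma CApt (hL₁ : L₁ ≠ 0) : CA L₁ pt = 3 / (16 * |L₁|) := by
  have hc := abs_pos' hL₁
  unfold CA; rw [Rpt]; field_simp; ring
lemma Ctpt : Ct L₁ pt = 0 := by unfold Ct; rw [pt4]; ring
lemma w0pt (hL₁ : L₁ ≠ 0) : w0 L₁ pt = 11/24 := by
  have hc := abs_pos' hL₁
  unfold w0; rw [CBpt hL₁, CApt hL₁, pt0]; field_simp; ring
lemma w1pt (hL₁ : L₁ ≠ 0) : w1 L₁ pt = 13/24 := by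
  have hc := abs_pos' hL₁
  unfold w1; rw [CBpt hL₁, CApt hL₁, pt1]; field_simp; ring
lemma w2pt : w2 L₁ pt = 0 := by unfold w2; rw [pt2]; ring
lemma w3pt : w3 L₁ pt = 0 := by unfold w3; rw [pt3]; ring

lemma hasKS_pt (hL₁ : L₁ ≠ 0) : HasFDerivAt (KS L₁)
    (Lam (-13/(48*|L₁|)) (-17/(48*|L₁|)) 0 0 0) pt := by
  have hc := abs_pos' hL₁
  have hpt := pt_mem hL₁
  have h4S : (4 * Sfn L₁ pt) ≠ 0 := by rw [Spt]; positivity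
  have h8R : (8 * Rfn L₁ pt) ≠ 0 := by rw [Rpt]; positivity
  have h8T : (8 * Tfn L₁ pt) ≠ 0 := by rw [Tpt]; positivity
  have h1 := (hasDerivAt_inv h4S).comp_hasFDerivAt pt ((hasS hpt).const_mul (4:ℝ))
  have h2 := (hasDerivAt_inv h8R).comp_hasFDerivAt pt ((hasR hpt).const_mul (8:ℝ))
  have h3 := (hasDerivAt_inv h8T).comp_hasFDerivAt pt ((hasT hpt).const_mul (8:ℝ))
  have h := (h1.add (h2.const_mul (3:ℝ))).sub h3
  refine h.congr_fderiv ?_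
  ext v
  simp [Lam, pr, Bpt, Spt, Rpt, Tpt]
  field_simp
  ring

lemma hasInvS_pt (hL₁ : L₁ ≠ 0) : HasFDerivAt (fun q => (Sfn L₁ q)⁻¹)
    (Lam (-4/(9*|L₁|)) (-8/(9*|L₁|)) 0 0 0) pt := by
  have hc := abs_pos' hL₁
  have hpt := pt_mem hL₁
  have hS : Sfn L₁ pt ≠ 0 := by rw [Spt]; positivity
  have h := (hasDerivAt_inv hS).comp_hasFDerivAt pt (hasS hpt)
  refine h.congr_fderiv ?_
  ext v
  simp [Lam, pr, Bpt, Spt]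
  field_simp
  ring

lemma hasCB_pt (hL₁ : L₁ ≠ 0) : HasFDerivAt (CB L₁)
    (Lam (-1/(18*|L₁|)) (-1/(9*|L₁|)) 0 0 0) pt := by
  have hc := abs_pos' hL₁
  have hpt := pt_mem hL₁
  have h8R : (8 * Rfn L₁ pt) ≠ 0 := by rw [Rpt]; positivity
  have h8T : (8 * Tfn L₁ pt) ≠ 0 := by rw [Tpt]; positivity
  have h1 := ((hasB L₁ pt).mul (hasInvS_pt hL₁)).mul (hasKS_pt hL₁)
  have h2 := ((hasDerivAt_inv h8R).comp_hasFDerivAt pt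
      ((hasR hpt).const_mul (8:ℝ))).const_mul (3:ℝ)
  have h3 := (hasDerivAt_inv h8T).comp_hasFDerivAt pt ((hasT hpt).const_mul (8:ℝ))
  have h := (h1.sub h2).sub h3
  refine h.congr_fderiv ?_
  ext v
  simp [Lam, pr, Bpt, Spt, Rpt, Tpt, KSpt hL₁]
  field_simp
  ring

lemma hasCA_pt (hL₁ : L₁ ≠ 0) : HasFDerivAt (CA L₁)
    (Lam (-3/(16*|L₁|)) (-3/(16*|L₁|)) 0 0 0) pt := by
  have hc := abs_pos' hL₁
  have hpt := pt_mem hL₁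
  have h8R : (8 * Rfn L₁ pt) ≠ 0 := by rw [Rpt]; positivity
  have h := ((hasDerivAt_inv h8R).comp_hasFDerivAt pt
      ((hasR hpt).const_mul (8:ℝ))).const_mul (3:ℝ)
  refine h.congr_fderiv ?_
  ext v
  simp [Lam, pr, Bpt, Spt, Rpt]
  field_simp
  ring

lemma hasCt_pt (hL₁ : L₁ ≠ 0) : HasFDerivAt (Ct L₁)
    (Lam 0 0 0 0 (5/(24*|L₁|^2))) pt := by
  have hc := abs_pos' hL₁
  have h := (((hasCoord 4 pt).mul (hasInvS_pt hL₁)).mul (hasKS_pt hL₁))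
  refine h.congr_fderiv ?_
  ext v
  simp [Lam, pr, Spt, KSpt hL₁]
  field_simp
  simp only [← sq_abs L₁]
  ring

lemma hasw0_pt (hL₁ : L₁ ≠ 0) : HasFDerivAt (w0 L₁) (Lam (1/36) (-35/72) 0 0 0) pt := by
  have hc := abs_pos' hL₁
  have h := ((hasCB_pt hL₁).mul ((hasCoord 0 pt).const_mul |L₁|)).add
    ((hasCA_pt hL₁).mul ((hasCoord 0 pt).const_mul (2*|L₁|)))
  refine h.congr_fderiv ?_
  ext v
  simp [Lam, pr, CBpt hL₁, CApt hL₁]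
  field_simp
  ring

lemma hasw1_pt (hL₁ : L₁ ≠ 0) : HasFDerivAt (w1 L₁) (Lam (-35/72) (-1/18) 0 0 0) pt := by
  have hc := abs_pos' hL₁
  have h := ((hasCB_pt hL₁).mul ((hasCoord 1 pt).const_mul (2*|L₁|))).add
    ((hasCA_pt hL₁).mul ((hasCoord 1 pt).const_mul (2*|L₁|)))
  refine h.congr_fderiv ?_
  ext v
  simp [Lam, pr, CBpt hL₁, CApt hL₁]
  field_simp
  ring

lemma hasE_pt (hL₁ : L₁ ≠ 0) : HasFDerivAt (Efn L₁)
    (Lam (11/24 * Efn L₁ pt) (13/24 * Efn L₁ pt) 0 0 0) pt := by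
  have h := hasE (pt_mem hL₁)
  refine h.congr_fderiv ?_
  ext v
  simp [Lam, pr, w0pt hL₁, w1pt hL₁, w2pt, w3pt, Ctpt]
  ring

lemma hasG0_pt (hL₁ : L₁ ≠ 0) : HasFDerivAt (g0 L₁)
    (Lam (137/576 * Efn L₁ pt) (-(137/576) * Efn L₁ pt) 0 0 0) pt := by
  have h := ((hasE_pt hL₁).mul (hasw0_pt hL₁)).add
    (((hasCoord 2 pt).const_mul (-L₁)).mul ((hasE_pt hL₁).mul (hasCt_pt hL₁)))
  refine h.congr_fderiv ?_
  ext v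
  simp [Lam, pr, w0pt hL₁, Ctpt]
  ring

lemma hasG1_pt (hL₁ : L₁ ≠ 0) : HasFDerivAt (g1 L₁)
    (Lam (-(137/576) * Efn L₁ pt) (137/576 * Efn L₁ pt) 0 0 0) pt := by
  have h := ((hasE_pt hL₁).mul (hasw1_pt hL₁)).add
    (((hasCoord 3 pt).const_mul (-(2*L₁))).mul ((hasE_pt hL₁).mul (hasCt_pt hL₁)))
  refine h.congr_fderiv ?_
  ext v
  simp [Lam, pr, w1pt hL₁, Ctpt]
  ring

end PT

section XG
variable {L : Fin 2 → ℝ}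

lemma X0N (hx : q ∈ UU L₁) (hL : L = ![L₁, 2*L₁]) :
    X 2 L 0 (Nfun L₁) q = g0 L₁ q := by
  show pderiv' 0 (Nfun L₁) q + (-(L 0) * q 2) * pderiv' 4 (Nfun L₁) q = _
  rw [pderiv', pderiv', (hasN hx).fderiv]
  simp [hL, g0]

lemma X1N (hx : q ∈ UU L₁) (hL : L = ![L₁, 2*L₁]) :
    X 2 L 1 (Nfun L₁) q = g1 L₁ q := by
  show pderiv' 1 (Nfun L₁) q + (-(L 1) * q 3) * pderiv' 4 (Nfun L₁) q = _
  rw [pderiv', pderiv', (hasN hx).fderiv]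
  simp [hL, g1]

lemma X2N (hx : q ∈ UU L₁) (hL : L = ![L₁, 2*L₁]) :
    X 2 L 2 (Nfun L₁) q = g2 L₁ q := by
  show pderiv' 2 (Nfun L₁) q + (L 0 * q 0) * pderiv' 4 (Nfun L₁) q = _
  rw [pderiv', pderiv', (hasN hx).fderiv]
  simp [hL, g2]

lemma X3N (hx : q ∈ UU L₁) (hL : L = ![L₁, 2*L₁]) :
    X 2 L 3 (Nfun L₁) q = g3 L₁ q := by
  show pderiv' 3 (Nfun L₁) q + (L 1 * q 1) * pderiv' 4 (Nfun L₁) q = _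
  rw [pderiv', pderiv', (hasN hx).fderiv]
  simp [hL, g3]


lemma XN0pt (hL₁ : L₁ ≠ 0) (hL : L = ![L₁, 2*L₁]) : X 2 L 0 (Nfun L₁) pt = 11/24 * Efn L₁ pt := by
  rw [X0N (pt_mem hL₁) hL, g0, w0pt hL₁, Ctpt]; ring
lemma XN1pt (hL₁ : L₁ ≠ 0) (hL : L = ![L₁, 2*L₁]) : X 2 L 1 (Nfun L₁) pt = 13/24 * Efn L₁ pt := by
  rw [X1N (pt_mem hL₁) hL, g1, w1pt hL₁, Ctpt]; ring
lemma XN2pt (hL₁ : L₁ ≠ 0) (hL : L = ![L₁, 2*L₁]) : X 2 L 2 (Nfun L₁) pt = 0 := by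
  rw [X2N (pt_mem hL₁) hL, g2, w2pt, Ctpt]; ring
lemma XN3pt (hL₁ : L₁ ≠ 0) (hL : L = ![L₁, 2*L₁]) : X 2 L 3 (Nfun L₁) pt = 0 := by
  rw [X3N (pt_mem hL₁) hL, g3, w3pt, Ctpt]; ring

lemma ev0 (hL₁ : L₁ ≠ 0) (hL : L = ![L₁, 2*L₁]) : X 2 L 0 (Nfun L₁) =ᶠ[nhds pt] g0 L₁ :=
  Filter.eventuallyEq_of_mem (isOpen_UU.mem_nhds (pt_mem hL₁)) (fun x hx => X0N hx hL)
lemma ev1 (hL₁ : L₁ ≠ 0) (hL : L = ![L₁, 2*L₁]) : X 2 L 1 (Nfun L₁) =ᶠ[nhds pt] g1 L₁ :=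
  Filter.eventuallyEq_of_mem (isOpen_UU.mem_nhds (pt_mem hL₁)) (fun x hx => X1N hx hL)

lemma XX00 (hL₁ : L₁ ≠ 0) (hL : L = ![L₁, 2*L₁]) : X 2 L 0 (X 2 L 0 (Nfun L₁)) pt = 137/576 * Efn L₁ pt := by
  show pderiv' 0 (X 2 L 0 (Nfun L₁)) pt + (-(L 0) * pt 2) * pderiv' 4 (X 2 L 0 (Nfun L₁)) pt = _
  rw [pderiv', pderiv', (ev0 hL₁ hL).fderiv_eq, (hasG0_pt hL₁).fderiv]
  simp

lemma XX01 (hL₁ : L₁ ≠ 0) (hL : L = ![L₁, 2*L₁]) : X 2 L 0 (X 2 L 1 (Nfun L₁)) pt = -(137/576) * Efn L₁ pt := by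
  show pderiv' 0 (X 2 L 1 (Nfun L₁)) pt + (-(L 0) * pt 2) * pderiv' 4 (X 2 L 1 (Nfun L₁)) pt = _
  rw [pderiv', pderiv', (ev1 hL₁ hL).fderiv_eq, (hasG1_pt hL₁).fderiv]
  simp

lemma XX10 (hL₁ : L₁ ≠ 0) (hL : L = ![L₁, 2*L₁]) : X 2 L 1 (X 2 L 0 (Nfun L₁)) pt = -(137/576) * Efn L₁ pt := by
  show pderiv' 1 (X 2 L 0 (Nfun L₁)) pt + (-(L 1) * pt 3) * pderiv' 4 (X 2 L 0 (Nfun L₁)) pt = _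
  rw [pderiv', pderiv', (ev0 hL₁ hL).fderiv_eq, (hasG0_pt hL₁).fderiv]
  simp

lemma XX11 (hL₁ : L₁ ≠ 0) (hL : L = ![L₁, 2*L₁]) : X 2 L 1 (X 2 L 1 (Nfun L₁)) pt = 137/576 * Efn L₁ pt := by
  show pderiv' 1 (X 2 L 1 (Nfun L₁)) pt + (-(L 1) * pt 3) * pderiv' 4 (X 2 L 1 (Nfun L₁)) pt = _
  rw [pderiv', pderiv', (ev1 hL₁ hL).fderiv_eq, (hasG1_pt hL₁).fderiv]
  simp

end XG
end AHAux

theorem anisotropic_heisenberg_N_not_infinite_harmonic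
    (L₁ : ℝ) (hL₁ : L₁ ≠ 0) (L : Fin 2 → ℝ) (hL : L = ![L₁, 2*L₁]) :
    ∃ q : Fin (2*2+1) → ℝ, q ≠ 0 ∧
      ∑ i : Fin (2*2), ∑ j : Fin (2*2),
        X 2 L i (X 2 L j (Nfun L₁)) q * X 2 L i (Nfun L₁) q * X 2 L j (Nfun L₁) q ≠ 0 := by
  refine ⟨pt, ?_, ?_⟩
  · intro h0
    have := congrFun h0 0
    rw [pt0] at this
    exact one_ne_zero this
  · have expand : ∀ (F : Fin (2*2) → ℝ), ∑ i, F i = F 0 + F 1 + F 2 + F 3 :=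
      fun F => Fin.sum_univ_four F
    rw [expand]
    simp only [expand]
    rw [XX00 hL₁ hL, XX01 hL₁ hL, XX10 hL₁ hL, XX11 hL₁ hL,
      XN0pt hL₁ hL, XN1pt hL₁ hL, XN2pt hL₁ hL, XN3pt hL₁ hL]
    simp only [mul_zero, zero_mul, add_zero, zero_add]
    have hE3 : 0 < Efn L₁ pt ^ 3 := pow_pos (Real.exp_pos _) 3
    intro hcon
    nlinarith [hE3]
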